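/- The set P⁺ K_ℂ N_ℂ = {[[a,b],[c,d]] ∈ SL(2,ℂ) : c + d ≠ 0} is dense in SL(2,ℂ). -/

import Mathlib

open Matrix

noncomputable def pplus (x : ℂ) : Matrix (Fin 2) (Fin 2) ℂ := !![1, x; 0, 1]

noncomputable def kmat (γ : ℂ) : Matrix (Fin 2) (Fin 2) ℂ := !![γ, 0; 0, γ⁻¹]

noncomputable def nmat (s : ℂ) : Matrix (Fin 2) (Fin 2) ℂ :=
  !![1 + Complex.I * s, -(Complex.I * s); Complex.I * s, 1 - Complex.I * s]

/-- `SL(2,ℂ)` carries the subspace topology of the space of `2×2` complex matrices. -/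
noncomputable instance : TopologicalSpace (Matrix.SpecialLinearGroup (Fin 2) ℂ) :=
  TopologicalSpace.induced (fun g => (g : Matrix (Fin 2) (Fin 2) ℂ)) inferInstance

lemma hs_eq_aux (c e : ℂ) : Complex.I * (-Complex.I * c / e) = c / e := by
  rw [← mul_div_assoc, ← mul_assoc, mul_neg, Complex.I_mul_I, neg_neg, one_mul]

lemma decomp_aux (a b c d : ℂ) (hdet : a * d - b * c = 1) (hcd : c + d ≠ 0) :
    !![a,b;c,d] = pplus ((a+b)/(c+d) - 1/(c+d)^2) * kmat (c+d)⁻¹ * nmat (-Complex.I * c/(c+d)) := by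
  ext i j
  fin_cases i <;> fin_cases j <;>
    · simp only [pplus, kmat, nmat, Matrix.mul_apply, Fin.sum_univ_two, Fin.isValue,
        Matrix.cons_val', Matrix.cons_val_zero, Matrix.cons_val_one, Matrix.head_cons,
        Matrix.empty_val', Matrix.cons_val_fin_one, Matrix.head_fin_const, hs_eq_aux,
        Matrix.of_apply, Fin.zero_eta, Fin.mk_one]
      field_simp [hcd]
      try first
      | linear_combination (c+d)^5 * hdet
      | linear_combination (-(c+d)^5) * hdet
      | linear_combination (c+d)^2 * hdet
      | linear_combination (-(c+d)^2) * hdet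
      | ring

noncomputable def lmat_aux (t : ℂ) : Matrix.SpecialLinearGroup (Fin 2) ℂ :=
  ⟨!![1, 0; t, 1], by simp [Matrix.det_fin_two_of]⟩

lemma dense_aux : Dense {g : Matrix.SpecialLinearGroup (Fin 2) ℂ |
    (g : Matrix (Fin 2) (Fin 2) ℂ) 1 0 + (g : Matrix (Fin 2) (Fin 2) ℂ) 1 1 ≠ 0} := by
  intro g
  by_cases hg : (g : Matrix (Fin 2) (Fin 2) ℂ) 1 0 + (g : Matrix (Fin 2) (Fin 2) ℂ) 1 1 ≠ 0
  · exact subset_closure hg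
  · push_neg at hg
    have hd : (g : Matrix (Fin 2) (Fin 2) ℂ) 1 1 ≠ 0 := by
      intro hd0
      have hc0 : (g : Matrix (Fin 2) (Fin 2) ℂ) 1 0 = 0 := by
        rw [hd0, add_zero] at hg; exact hg
      have := g.property
      rw [Matrix.det_fin_two, hc0, hd0] at this
      simp at this
    set u : ℕ → Matrix.SpecialLinearGroup (Fin 2) ℂ :=
      fun n => g * lmat_aux (((n : ℂ) + 1)⁻¹) with hu
    have hne : ∀ n : ℕ, ((n : ℂ) + 1) ≠ 0 := fun n => Nat.cast_add_one_ne_zero n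
    have hmem : ∀ n, u n ∈ {g : Matrix.SpecialLinearGroup (Fin 2) ℂ |
        (g : Matrix (Fin 2) (Fin 2) ℂ) 1 0 + (g : Matrix (Fin 2) (Fin 2) ℂ) 1 1 ≠ 0} := by
      intro n
      have hentry : ((u n : Matrix (Fin 2) (Fin 2) ℂ)) 1 0 + ((u n : Matrix (Fin 2) (Fin 2) ℂ)) 1 1
          = ((g : Matrix (Fin 2) (Fin 2) ℂ) 1 0 + (g : Matrix (Fin 2) (Fin 2) ℂ) 1 1)
            + (g : Matrix (Fin 2) (Fin 2) ℂ) 1 1 * ((n : ℂ) + 1)⁻¹ := by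
        simp only [hu]
        rw [Matrix.SpecialLinearGroup.coe_mul]
        simp [hu, lmat_aux, Matrix.SpecialLinearGroup.coe_mul, Matrix.mul_apply,
          Fin.sum_univ_two]
        ring
      simp only [Set.mem_setOf_eq, hentry, hg, zero_add]
      exact mul_ne_zero hd (inv_ne_zero (hne n))
    have htend : Filter.Tendsto u Filter.atTop (nhds g) := by
      rw [nhds_induced, Filter.tendsto_comap_iff]
      have h1 : Filter.Tendsto (fun n : ℕ => (lmat_aux (((n : ℂ) + 1)⁻¹) : Matrix (Fin 2) (Fin 2) ℂ))
          Filter.atTop (nhds (1 : Matrix (Fin 2) (Fin 2) ℂ)) := by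
        have hbase : Filter.Tendsto (fun n : ℕ => ((n : ℂ) + 1)⁻¹) Filter.atTop (nhds 0) := by
          have hr : Filter.Tendsto (fun n : ℕ => ((n : ℝ) + 1)⁻¹) Filter.atTop (nhds 0) :=
            tendsto_one_div_add_atTop_nhds_zero_nat.congr (by intro n; rw [one_div])
          have h := (Complex.continuous_ofReal.tendsto 0).comp hr
          rw [Complex.ofReal_zero] at h
          refine h.congr fun n => ?_
          simp [Function.comp]
        rw [show (1 : Matrix (Fin 2) (Fin 2) ℂ) = !![1,0;0,1] from by simp [Matrix.one_fin_two]]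
        refine tendsto_pi_nhds.2 ?_
        intro i
        refine tendsto_pi_nhds.2 ?_
        intro j
        fin_cases i <;> fin_cases j <;> simp [lmat_aux]
        · exact hbase
      have h2 : Filter.Tendsto (fun n : ℕ => (g : Matrix (Fin 2) (Fin 2) ℂ) *
          (lmat_aux (((n : ℂ) + 1)⁻¹) : Matrix (Fin 2) (Fin 2) ℂ)) Filter.atTop
          (nhds ((g : Matrix (Fin 2) (Fin 2) ℂ) * 1)) := h1.const_mul _
      rw [mul_one] at h2
      exact h2
    exact mem_closure_of_tendsto htend (Filter.Eventually.of_forall hmem)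

/-- `P⁺ K_ℂ N_ℂ = {g ∈ SL(2,ℂ) : c + d ≠ 0}` is dense in `SL(2,ℂ)`. -/
theorem pkn_dense :
    ({g : Matrix.SpecialLinearGroup (Fin 2) ℂ |
        ∃ x γ s : ℂ, γ ≠ 0 ∧ (g : Matrix (Fin 2) (Fin 2) ℂ) = pplus x * kmat γ * nmat s}
      = {g : Matrix.SpecialLinearGroup (Fin 2) ℂ |
          (g : Matrix (Fin 2) (Fin 2) ℂ) 1 0 + (g : Matrix (Fin 2) (Fin 2) ℂ) 1 1 ≠ 0}) ∧
    Dense {g : Matrix.SpecialLinearGroup (Fin 2) ℂ |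
        (g : Matrix (Fin 2) (Fin 2) ℂ) 1 0 + (g : Matrix (Fin 2) (Fin 2) ℂ) 1 1 ≠ 0} := by
  constructor
  · ext g
    simp only [Set.mem_setOf_eq]
    constructor
    · rintro ⟨x, γ, s, hγ, hg⟩
      rw [hg]
      have h : (pplus x * kmat γ * nmat s) 1 0 + (pplus x * kmat γ * nmat s) 1 1 = γ⁻¹ := by
        simp [pplus, kmat, nmat, Matrix.mul_apply, Fin.sum_univ_two]
        ring
      rw [h]
      exact inv_ne_zero hγ
    · intro hcd
      set a := (g : Matrix (Fin 2) (Fin 2) ℂ) 0 0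
      set b := (g : Matrix (Fin 2) (Fin 2) ℂ) 0 1
      set c := (g : Matrix (Fin 2) (Fin 2) ℂ) 1 0
      set d := (g : Matrix (Fin 2) (Fin 2) ℂ) 1 1
      have hdet : a * d - b * c = 1 := by
        have := g.property
        rw [Matrix.det_fin_two] at this
        exact this
      refine ⟨(a+b)/(c+d) - 1/(c+d)^2, (c+d)⁻¹, -Complex.I * c/(c+d), inv_ne_zero hcd, ?_⟩
      rw [Matrix.eta_fin_two (g : Matrix (Fin 2) (Fin 2) ℂ)]
      exact decomp_aux a b c d hdet hcd
  · exact dense_aux
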